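/- If G is a fully residually free group and g ∈ G is nontrivial, then the centralizer Z(g) of g in G is commutative (abelian). -/

import Mathlib

/-- A group `G` is fully residually free if for every finite set `X` of nontrivial
elements there is a homomorphism to a free group killing no element of `X`. -/
def FullyResiduallyFree (G : Type*) [Group G] : Prop :=
  ∀ X : Finset G, (1 : G) ∉ X →
    ∃ (ι : Type) (f : G →* FreeGroup ι), ∀ x ∈ X, f x ≠ 1

private lemma list_all_eq_of_cons_eq_append {β : Type*} :
    ∀ (l : List β) (a : β), a :: l = l ++ [a] → ∀ x ∈ l, x = a := by
  intro l
  induction l with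
  | nil => simp
  | cons b t ih =>
    intro a h
    rw [List.cons_append] at h
    obtain ⟨h1, h2⟩ := List.cons_eq_cons.mp h
    subst h1
    intro x hx
    rcases List.mem_cons.mp hx with rfl | hx
    · rfl
    · exact ih _ h2 x hx

private lemma freeGroup_commute_of_eq_pow {α : Type*} [DecidableEq α] (i : α) :
    ∀ (n : ℕ) (w : FreeGroup α), w.toWord.length ≤ n →
      Commute w (FreeGroup.of i) → ∃ m : ℤ, w = FreeGroup.of i ^ m := by
  intro n
  induction n with
  | zero =>
    intro w hw _
    refine ⟨0, ?_⟩
    rw [zpow_zero]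
    exact FreeGroup.toWord_eq_nil_iff.mp (List.length_eq_zero_iff.mp (Nat.le_zero.mp hw))
  | succ n ih =>
    intro w hw hcomm
    have hred : FreeGroup.reduce w.toWord = w.toWord := FreeGroup.reduce_toWord w
    have hwmk : FreeGroup.mk w.toWord = w := FreeGroup.mk_toWord
    rcases hL : w.toWord with _ | ⟨⟨j, b⟩, T⟩
    · exact ⟨0, by rw [zpow_zero]; exact FreeGroup.toWord_eq_nil_iff.mp hL⟩
    by_cases hj : j = i
    · subst hj
      cases b
      · -- head is (j, false) : cancel with of j on the left
        set w' := FreeGroup.of j * w with hw'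
        have hmul : w' = FreeGroup.mk ((j, true) :: (j, false) :: T) := by
          rw [hw', ← hwmk, hL]
          exact FreeGroup.mul_mk
        have hstep : FreeGroup.Red.Step ((j, true) :: (j, false) :: T) T :=
          @FreeGroup.Red.Step.not α [] T j true
        have htw : w'.toWord = FreeGroup.reduce T := by
          rw [hmul, FreeGroup.toWord_mk, FreeGroup.reduce.Step.eq hstep]
        have hlen : w'.toWord.length ≤ n := by
          rw [htw]
          have h1 : (FreeGroup.reduce T).length ≤ T.length :=
            FreeGroup.Red.length_le (FreeGroup.reduce.red)
          have h2 : T.length + 1 ≤ n + 1 := by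
            have := hw; rw [hL] at this; simpa using this
          omega
        have hcomm' : Commute w' (FreeGroup.of j) :=
          (Commute.refl (FreeGroup.of j)).mul_left hcomm
        obtain ⟨m, hm⟩ := ih w' hlen hcomm'
        refine ⟨-1 + m, ?_⟩
        have : w = (FreeGroup.of j)⁻¹ * w' := by rw [hw']; group
        rw [this, hm, zpow_add, zpow_neg_one]
      · -- head is (j, true) : cancel with (of j)⁻¹ on the left
        set w' := (FreeGroup.of j)⁻¹ * w with hw'
        have hinv : (FreeGroup.of j)⁻¹ = FreeGroup.mk [(j, false)] := by
          have : FreeGroup.of j = FreeGroup.mk [(j, true)] := rfl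
          rw [this, FreeGroup.inv_mk]
          simp [FreeGroup.invRev]
        have hmul : w' = FreeGroup.mk ((j, false) :: (j, true) :: T) := by
          rw [hw', hinv, ← hwmk, hL]
          exact FreeGroup.mul_mk
        have hstep : FreeGroup.Red.Step ((j, false) :: (j, true) :: T) T :=
          @FreeGroup.Red.Step.not α [] T j false
        have htw : w'.toWord = FreeGroup.reduce T := by
          rw [hmul, FreeGroup.toWord_mk, FreeGroup.reduce.Step.eq hstep]
        have hlen : w'.toWord.length ≤ n := by
          rw [htw]
          have h1 : (FreeGroup.reduce T).length ≤ T.length :=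
            FreeGroup.Red.length_le (FreeGroup.reduce.red)
          have h2 : T.length + 1 ≤ n + 1 := by
            have := hw; rw [hL] at this; simpa using this
          omega
        have hcomm' : Commute w' (FreeGroup.of j) :=
          ((Commute.refl (FreeGroup.of j)).inv_left).mul_left hcomm
        obtain ⟨m, hm⟩ := ih w' hlen hcomm'
        refine ⟨1 + m, ?_⟩
        have : w = FreeGroup.of j * w' := by rw [hw']; group
        rw [this, hm, zpow_add, zpow_one]
    · -- head index ≠ i : derive a contradiction
      exfalso
      have h1 : FreeGroup.reduce ((i, true) :: w.toWord) = (i, true) :: w.toWord := by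
        rw [FreeGroup.reduce.cons, hred, hL]
        simp [Ne.symm hj]
      have h2 : FreeGroup.mk ((i, true) :: w.toWord) =
          FreeGroup.mk (w.toWord ++ [(i, true)]) := by
        have e1 : FreeGroup.mk ((i, true) :: w.toWord) = FreeGroup.of i * w := by
          conv_rhs => rw [← hwmk]
          exact (FreeGroup.mul_mk (L₁ := [(i, true)]) (L₂ := w.toWord)).symm
        have e2 : FreeGroup.mk (w.toWord ++ [(i, true)]) = w * FreeGroup.of i := by
          conv_rhs => rw [← hwmk]
          exact (FreeGroup.mul_mk (L₁ := w.toWord) (L₂ := [(i, true)])).symm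
        rw [e1, e2]
        exact hcomm.eq.symm
      have h3 : FreeGroup.reduce (w.toWord ++ [(i, true)]) = (i, true) :: w.toWord :=
        (FreeGroup.reduce.sound h2.symm).trans h1
      have h4 : FreeGroup.Red (w.toWord ++ [(i, true)]) ((i, true) :: w.toWord) :=
        h3 ▸ FreeGroup.reduce.red
      have h5 : (i, true) :: w.toWord = w.toWord ++ [(i, true)] :=
        h4.sublist.eq_of_length (by simp)
      have h6 : ((j, b) : α × Bool) = (i, true) :=
        list_all_eq_of_cons_eq_append w.toWord (i, true) h5 (j, b) (by rw [hL]; simp)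
      exact hj (congrArg Prod.fst h6)

private lemma freeGroup_comm_of_center {α : Type*} (z : FreeGroup α) (hz : z ≠ 1)
    (hc : ∀ u : FreeGroup α, Commute z u) : ∀ u v : FreeGroup α, Commute u v := by
  classical
  have hsub : ∀ i j : α, i = j := by
    intro i j
    obtain ⟨m, hm⟩ := freeGroup_commute_of_eq_pow i z.toWord.length z le_rfl
      (hc (FreeGroup.of i))
    obtain ⟨m', hm'⟩ := freeGroup_commute_of_eq_pow j z.toWord.length z le_rfl
      (hc (FreeGroup.of j))
    by_contra hij
    set f := FreeGroup.lift (fun k : α => if k = i then Multiplicative.ofAdd (1 : ℤ) else 1)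
      with hf
    have hfi : f (FreeGroup.of i) = Multiplicative.ofAdd (1 : ℤ) := by simp [hf]
    have hfj : f (FreeGroup.of j) = 1 := by simp [hf, Ne.symm hij]
    have h1 : f z = Multiplicative.ofAdd m := by
      rw [hm, map_zpow, hfi, ← ofAdd_zsmul]
      norm_num
    have h2 : f z = 1 := by rw [hm', map_zpow, hfj, one_zpow]
    have hm0 : m = 0 := by
      have := h1.symm.trans h2
      simpa using this
    exact hz (by rw [hm, hm0, zpow_zero])
  have gen : ∀ (k : α) (v : FreeGroup α), Commute (FreeGroup.of k) v := by
    intro k v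
    induction v using FreeGroup.induction_on with
    | C1 => exact Commute.one_right _
    | of l => exact (hsub k l) ▸ Commute.refl _
    | inv_of l h => exact h.inv_right
    | mul x y hx hy => exact hx.mul_right hy
  intro u v
  induction u using FreeGroup.induction_on with
  | C1 => exact Commute.one_left _
  | of k => exact gen k v
  | inv_of k h => exact h.inv_left
  | mul x y hx hy => exact hx.mul_left hy

/-- Centralizers of nontrivial elements in a free group are abelian. -/
private lemma freeGroup_centralizer_comm {ι : Type} (x : FreeGroup ι) (hx : x ≠ 1)
    {u v : FreeGroup ι} (hu : Commute u x) (hv : Commute v x) : Commute u v := by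
  set C := Subgroup.centralizer ({x} : Set (FreeGroup ι)) with hC
  have hmem : ∀ {w : FreeGroup ι}, Commute w x → w ∈ C := by
    intro w hw
    rw [hC, Subgroup.mem_centralizer_iff]
    intro h hh
    rw [Set.mem_singleton_iff] at hh
    subst hh
    exact hw.symm.eq
  have hxC : x ∈ C := hmem (Commute.refl x)
  let e : C ≃* FreeGroup (IsFreeGroup.Generators C) := IsFreeGroup.toFreeGroup C
  have hz : e ⟨x, hxC⟩ ≠ 1 := by
    intro h
    apply hx
    have : (⟨x, hxC⟩ : C) = 1 := by
      apply e.injective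
      rw [h, map_one]
    exact Subtype.ext_iff.mp this
  have hcent : ∀ w : FreeGroup (IsFreeGroup.Generators C), Commute (e ⟨x, hxC⟩) w := by
    intro w
    obtain ⟨c, rfl⟩ := e.surjective w
    have hcx : Commute (⟨x, hxC⟩ : C) c := by
      have hc2 : (c : FreeGroup ι) ∈ Subgroup.centralizer ({x} : Set (FreeGroup ι)) := c.2
      have hcx' : (c : FreeGroup ι) * x = x * (c : FreeGroup ι) :=
        ((Subgroup.mem_centralizer_iff.mp hc2) x (Set.mem_singleton x)).symm
      have hval : (((⟨x, hxC⟩ : C) * c : C) : FreeGroup ι) = ((c * ⟨x, hxC⟩ : C) : FreeGroup ι) :=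
        hcx'.symm
      exact Subtype.ext hval
    exact Commute.map hcx e.toMonoidHom
  have hcomm := freeGroup_comm_of_center (e ⟨x, hxC⟩) hz hcent
  have : Commute (⟨u, hmem hu⟩ : C) ⟨v, hmem hv⟩ := by
    have := hcomm (e ⟨u, hmem hu⟩) (e ⟨v, hmem hv⟩)
    have h2 := Commute.map this e.symm.toMonoidHom
    simpa using h2
  exact Subtype.ext_iff.mp this.eq

theorem centralizer_abelian_of_fullyResiduallyFree {G : Type*} [Group G]
    (hG : FullyResiduallyFree G) (g : G) (hg : g ≠ 1) :
    ∀ a ∈ Subgroup.centralizer ({g} : Set G), ∀ b ∈ Subgroup.centralizer ({g} : Set G),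
      a * b = b * a := by
  classical
  intro a ha b hb
  by_contra hne
  have hcomm : a * b * a⁻¹ * b⁻¹ ≠ 1 := by
    intro h
    apply hne
    rw [mul_inv_eq_one, mul_inv_eq_iff_eq_mul] at h
    exact h
  obtain ⟨ι, f, hf⟩ := hG {g, a * b * a⁻¹ * b⁻¹} (by
    simp only [Finset.mem_insert, Finset.mem_singleton]
    push_neg
    exact ⟨Ne.symm hg, Ne.symm hcomm⟩)
  have hfg : f g ≠ 1 := hf g (by simp)
  have hfc : f (a * b * a⁻¹ * b⁻¹) ≠ 1 := hf _ (by simp)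
  rw [Subgroup.mem_centralizer_iff] at ha hb
  have hag : g * a = a * g := ha g (Set.mem_singleton g)
  have hbg : g * b = b * g := hb g (Set.mem_singleton g)
  have hfa : Commute (f a) (f g) := by
    unfold Commute SemiconjBy
    rw [← map_mul, ← map_mul, hag]
  have hfb : Commute (f b) (f g) := by
    unfold Commute SemiconjBy
    rw [← map_mul, ← map_mul, hbg]
  have := freeGroup_centralizer_comm (f g) hfg hfa hfb
  apply hfc
  rw [map_mul, map_mul, map_mul, map_inv, map_inv]
  rw [this.eq]
  group
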